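/- Let ℍ be the continuous Heisenberg group of 3×3 real upper-triangular matrices with 1's on the diagonal, identified as a space with ℝ³ via the entries (a,b,c), with left Haar measure da db dc. For θ > 0 define W_θ³(a,b,c) = W_θ(a)W_θ(b)W_θ(c), where W_θ is the Wigner semicircle kernel. For k = (k_1,k_2,k_3) ∈ {0,1}³ let J_k = ∏_{l=1}^3 J_{k_l} with J_0 = (−∞,0) and J_1 = [0,∞), a local partition of ℍ at its identity with ∫_{J_k} W_θ³ da db dc = 1/8 for every k. If f ∈ L¹(ℍ) or f ∈ L^∞(ℍ) and x ∈ ℍ are such that for every k ∈ {0,1}³ the limit f(x,J_k) := lim_{y→e_ℍ, y∈J_k} f(y⁻¹x) exists, then lim_{θ→0⁺} (W_θ³ * f)(x) = (1/8) Σ_{k∈{0,1}³} f(x,J_k). -/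

import Mathlib

open MeasureTheory Filter Topology Real

/-- The Wigner semicircle kernel on `ℝ`: `W θ t = (2/(πθ²))√(θ² - t²)` for `-θ ≤ t ≤ θ`
and `0` otherwise. (In Lean `Real.sqrt` of a negative number is `0`, so this single formula
agrees with the piecewise definition.) -/
noncomputable def wigner (θ t : ℝ) : ℝ := 2 / (π * θ ^ 2) * Real.sqrt (θ ^ 2 - t ^ 2)

/-- The product kernel `W_θ³(a,b,c) = W_θ(a) W_θ(b) W_θ(c)` on the Heisenberg group
`ℍ ≅ ℝ³` (coordinates `(a,b,c)`, left Haar measure `da db dc`). -/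
noncomputable def wigner3 (θ : ℝ) (y : ℝ × ℝ × ℝ) : ℝ :=
  wigner θ y.1 * wigner θ y.2.1 * wigner θ y.2.2

/-- In the Heisenberg group (matrices `[[1,a,b],[0,1,c],[0,0,1]]`, with
`(a,b,c)·(a',b',c') = (a+a', b+b'+ac', c+c')`), the product
`y⁻¹ · x = (x₁-y₁, x₂-y₂+y₁y₃-y₁x₃, x₃-y₃)`. -/
def heisInvMul (y x : ℝ × ℝ × ℝ) : ℝ × ℝ × ℝ :=
  (x.1 - y.1, x.2.1 - y.2.1 + y.1 * y.2.2 - y.1 * x.2.2, x.2.2 - y.2.2)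

/-- The two half-lines `J_0 = (-∞,0)` and `J_1 = [0,∞)`. -/
def halfLine : Fin 2 → Set ℝ := ![Set.Iio 0, Set.Ici 0]

/-- The octant `J_k = ∏_{l=1}^3 J_{k_l} ⊆ ℍ ≅ ℝ³` for `k ∈ {0,1}³`. -/
def octant (k : Fin 3 → Fin 2) : Set (ℝ × ℝ × ℝ) :=
  {y | y.1 ∈ halfLine (k 0) ∧ y.2.1 ∈ halfLine (k 1) ∧ y.2.2 ∈ halfLine (k 2)}

/-! ### Auxiliary lemmas on the Wigner kernel -/

lemma wigner_nonneg (θ t : ℝ) : 0 ≤ wigner θ t := by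
  unfold wigner; positivity

lemma wigner3_nonneg (θ : ℝ) (y : ℝ × ℝ × ℝ) : 0 ≤ wigner3 θ y :=
  mul_nonneg (mul_nonneg (wigner_nonneg _ _) (wigner_nonneg _ _)) (wigner_nonneg _ _)

lemma wigner_eq_zero {θ t : ℝ} (hθ : 0 ≤ θ) (h : θ ≤ |t|) : wigner θ t = 0 := by
  have h2 : θ ^ 2 - t ^ 2 ≤ 0 := by
    have h3 := sq_abs t
    nlinarith [abs_nonneg t]
  unfold wigner
  rw [Real.sqrt_eq_zero'.mpr (by linarith), mul_zero]

lemma abs_lt_of_wigner_ne {θ t : ℝ} (hθ : 0 ≤ θ) (h : wigner θ t ≠ 0) : |t| < θ := by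
  by_contra hc
  exact h (wigner_eq_zero hθ (not_lt.mp hc))

lemma wigner_continuous (θ : ℝ) : Continuous (wigner θ) := by
  unfold wigner
  exact continuous_const.mul (Real.continuous_sqrt.comp (by continuity))

lemma wigner_integrable {θ : ℝ} (hθ : 0 < θ) : Integrable (wigner θ) := by
  apply (wigner_continuous θ).integrable_of_hasCompactSupport
  apply HasCompactSupport.intro (isCompact_Icc (a := -θ) (b := θ))
  intro t ht
  apply wigner_eq_zero hθ.le
  rw [Set.mem_Icc, not_and_or, not_le, not_le] at ht
  rcases ht with h | h
  · rw [abs_of_neg (by linarith)]; linarith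
  · rw [abs_of_pos (by linarith)]; linarith

lemma wigner_le {θ t : ℝ} (hθ : 0 < θ) : wigner θ t ≤ 2 / (π * θ) := by
  unfold wigner
  have h1 : Real.sqrt (θ ^ 2 - t ^ 2) ≤ θ := by
    calc Real.sqrt (θ ^ 2 - t ^ 2) ≤ Real.sqrt (θ ^ 2) :=
          Real.sqrt_le_sqrt (by nlinarith [sq_nonneg t])
    _ = θ := by rw [Real.sqrt_sq hθ.le]
  calc 2 / (π * θ ^ 2) * Real.sqrt (θ ^ 2 - t ^ 2) ≤ 2 / (π * θ ^ 2) * θ := by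
        apply mul_le_mul_of_nonneg_left h1 (by positivity)
  _ = 2 / (π * θ) := by field_simp

lemma wigner3_continuous (θ : ℝ) : Continuous (wigner3 θ) := by
  unfold wigner3
  exact (((wigner_continuous θ).comp continuous_fst).mul
    ((wigner_continuous θ).comp (continuous_fst.comp continuous_snd))).mul
    ((wigner_continuous θ).comp (continuous_snd.comp continuous_snd))

lemma wigner3_integrable {θ : ℝ} (hθ : 0 < θ) :
    Integrable (wigner3 θ) (volume : Measure (ℝ × ℝ × ℝ)) := by
  have h2 : Integrable (fun p : ℝ × ℝ => wigner θ p.1 * wigner θ p.2)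
      (volume : Measure (ℝ × ℝ)) := by
    rw [Measure.volume_eq_prod]
    exact (wigner_integrable hθ).mul_prod (wigner_integrable hθ)
  have h3 : Integrable (fun y : ℝ × ℝ × ℝ => wigner θ y.1 * (wigner θ y.2.1 * wigner θ y.2.2))
      (volume : Measure (ℝ × ℝ × ℝ)) := by
    rw [Measure.volume_eq_prod]
    exact (wigner_integrable hθ).mul_prod h2
  have : wigner3 θ = fun y : ℝ × ℝ × ℝ =>
      wigner θ y.1 * (wigner θ y.2.1 * wigner θ y.2.2) := by
    funext y; rw [wigner3, mul_assoc]
  rw [this]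
  exact h3

lemma wigner3_bound {θ : ℝ} (hθ : 0 < θ) (y : ℝ × ℝ × ℝ) :
    wigner3 θ y ≤ (2 / (π * θ)) ^ 3 := by
  have h0 : (0:ℝ) ≤ 2 / (π * θ) := by positivity
  unfold wigner3
  calc wigner θ y.1 * wigner θ y.2.1 * wigner θ y.2.2
      ≤ (2 / (π * θ)) * (2 / (π * θ)) * (2 / (π * θ)) := by
        apply mul_le_mul (mul_le_mul (wigner_le hθ) (wigner_le hθ)
          (wigner_nonneg _ _) h0) (wigner_le hθ) (wigner_nonneg _ _) (by positivity)
  _ = (2 / (π * θ)) ^ 3 := by ring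

/-! ### Integral of the Wigner kernel over half-lines -/

lemma sqrt_int {θ : ℝ} (hθ : 0 < θ) :
    ∫ t in (-θ)..θ, Real.sqrt (θ^2 - t^2) = θ^2 * π / 2 := by
  have h1 : ∀ t : ℝ, Real.sqrt (θ^2 - t^2) = θ * Real.sqrt (1 - (t/θ)^2) := by
    intro t
    rw [show (1 : ℝ) - (t/θ)^2 = (θ^2 - t^2) / θ^2 by field_simp,
      Real.sqrt_div' _ (by positivity), Real.sqrt_sq hθ.le]
    field_simp
  simp_rw [h1]
  rw [intervalIntegral.integral_const_mul,
    intervalIntegral.integral_comp_div (fun t => Real.sqrt (1 - t^2)) hθ.ne']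
  rw [neg_div, div_self hθ.ne', integral_sqrt_one_sub_sq]
  simp [smul_eq_mul]; ring

lemma sqrt_int_half {θ : ℝ} (hθ : 0 < θ) :
    ∫ t in (0:ℝ)..θ, Real.sqrt (θ^2 - t^2) = θ^2 * π / 4 := by
  have heven : ∫ t in (0:ℝ)..θ, Real.sqrt (θ^2 - t^2)
      = ∫ t in (-θ)..(0:ℝ), Real.sqrt (θ^2 - t^2) := by
    have := intervalIntegral.integral_comp_neg (a := (0:ℝ)) (b := θ)
      (fun t => Real.sqrt (θ^2 - t^2))
    simp only [neg_sq, neg_zero] at this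
    rw [← this]
  have hii : ∀ a b : ℝ, IntervalIntegrable (fun t => Real.sqrt (θ^2 - t^2)) volume a b :=
    fun a b => Continuous.intervalIntegrable (by continuity) a b
  have hsplit := intervalIntegral.integral_add_adjacent_intervals (hii (-θ) 0) (hii 0 θ)
  rw [sqrt_int hθ] at hsplit
  linarith [heven]

lemma wigner_int_interval {θ a b : ℝ} (hθ : 0 < θ)
    (h : ∫ t in a..b, Real.sqrt (θ^2 - t^2) = θ^2 * π / 4) :
    ∫ t in a..b, wigner θ t = 1/2 := by
  unfold wigner
  rw [intervalIntegral.integral_const_mul, h]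
  field_simp
  ring

lemma wigner_int_Ici {θ : ℝ} (hθ : 0 < θ) : ∫ t in Set.Ici (0:ℝ), wigner θ t = 1/2 := by
  have hind : (Set.Ici (0:ℝ)).indicator (wigner θ) = (Set.Ico (0:ℝ) θ).indicator (wigner θ) := by
    funext t
    by_cases h1 : t ∈ Set.Ico (0:ℝ) θ
    · rw [Set.indicator_of_mem h1, Set.indicator_of_mem (Set.mem_Ici.mpr h1.1)]
    · by_cases h2 : t ∈ Set.Ici (0:ℝ)
      · rw [Set.indicator_of_mem h2, Set.indicator_of_notMem h1]
        simp only [Set.mem_Ico, not_and_or, not_lt, not_le] at h1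
        rcases h1 with h1 | h1
        · exact absurd h2 (by simpa using h1)
        · exact wigner_eq_zero hθ.le (by rwa [abs_of_nonneg h2])
      · rw [Set.indicator_of_notMem h2, Set.indicator_of_notMem h1]
  rw [← MeasureTheory.integral_indicator measurableSet_Ici, hind,
    MeasureTheory.integral_indicator measurableSet_Ico,
    integral_Ico_eq_integral_Ioo, ← integral_Ioc_eq_integral_Ioo,
    ← intervalIntegral.integral_of_le hθ.le]
  exact wigner_int_interval hθ (sqrt_int_half hθ)

lemma wigner_int_Iio {θ : ℝ} (hθ : 0 < θ) : ∫ t in Set.Iio (0:ℝ), wigner θ t = 1/2 := by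
  have hind : (Set.Iio (0:ℝ)).indicator (wigner θ) = (Set.Ico (-θ) 0).indicator (wigner θ) := by
    funext t
    by_cases h1 : t ∈ Set.Ico (-θ) (0:ℝ)
    · rw [Set.indicator_of_mem h1, Set.indicator_of_mem (Set.mem_Iio.mpr h1.2)]
    · by_cases h2 : t ∈ Set.Iio (0:ℝ)
      · rw [Set.indicator_of_mem h2, Set.indicator_of_notMem h1]
        simp only [Set.mem_Ico, not_and_or, not_lt, not_le] at h1
        rcases h1 with h1 | h1
        · exact wigner_eq_zero hθ.le (by rw [abs_of_neg h2]; linarith)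
        · exact absurd h2 (by simpa using h1)
      · rw [Set.indicator_of_notMem h2, Set.indicator_of_notMem h1]
  rw [← MeasureTheory.integral_indicator measurableSet_Iio, hind,
    MeasureTheory.integral_indicator measurableSet_Ico,
    integral_Ico_eq_integral_Ioo, ← integral_Ioc_eq_integral_Ioo,
    ← intervalIntegral.integral_of_le (by linarith : -θ ≤ 0)]
  apply wigner_int_interval hθ
  have hii : ∀ a b : ℝ, IntervalIntegrable (fun t => Real.sqrt (θ^2 - t^2)) volume a b :=
    fun a b => Continuous.intervalIntegrable (by continuity) a b
  have hsplit := intervalIntegral.integral_add_adjacent_intervals (hii (-θ) 0) (hii 0 θ)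
  rw [sqrt_int hθ, sqrt_int_half hθ] at hsplit
  linarith

lemma wigner_int_halfLine {θ : ℝ} (hθ : 0 < θ) (i : Fin 2) :
    ∫ t in halfLine i, wigner θ t = 1/2 := by
  fin_cases i
  · exact wigner_int_Iio hθ
  · exact wigner_int_Ici hθ

/-! ### Octants -/

lemma octant_eq (k : Fin 3 → Fin 2) :
    octant k = halfLine (k 0) ×ˢ (halfLine (k 1) ×ˢ halfLine (k 2)) := by
  ext y; rfl

lemma measurableSet_halfLine (i : Fin 2) : MeasurableSet (halfLine i) := by
  fin_cases i
  · exact measurableSet_Iio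
  · exact measurableSet_Ici

lemma measurableSet_octant (k : Fin 3 → Fin 2) : MeasurableSet (octant k) := by
  rw [octant_eq]
  exact (measurableSet_halfLine _).prod
    ((measurableSet_halfLine _).prod (measurableSet_halfLine _))

lemma halfLine_disjoint {i j : Fin 2} (h : i ≠ j) : Disjoint (halfLine i) (halfLine j) := by
  fin_cases i <;> fin_cases j <;> simp_all [halfLine] <;>
    first
      | exact Set.Iio_disjoint_Ici le_rfl
      | exact (Set.Iio_disjoint_Ici le_rfl).symm

lemma octant_disjoint : Pairwise (Function.onFun Disjoint octant) := by
  intro k k' hkk'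
  obtain ⟨i, hi⟩ := Function.ne_iff.mp hkk'
  rw [Function.onFun, Set.disjoint_left]
  intro y hy hy'
  fin_cases i
  · exact Set.disjoint_left.mp (halfLine_disjoint hi) hy.1 hy'.1
  · exact Set.disjoint_left.mp (halfLine_disjoint hi) hy.2.1 hy'.2.1
  · exact Set.disjoint_left.mp (halfLine_disjoint hi) hy.2.2 hy'.2.2

lemma octant_iUnion : (⋃ k, octant k) = (Set.univ : Set (ℝ × ℝ × ℝ)) := by
  ext y
  simp only [Set.mem_iUnion, Set.mem_univ, iff_true]
  have key : ∀ t : ℝ, ∃ i : Fin 2, t ∈ halfLine i := by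
    intro t
    rcases lt_or_ge t 0 with h | h
    · exact ⟨0, h⟩
    · exact ⟨1, h⟩
  obtain ⟨i1, h1⟩ := key y.1
  obtain ⟨i2, h2⟩ := key y.2.1
  obtain ⟨i3, h3⟩ := key y.2.2
  exact ⟨![i1, i2, i3], h1, h2, h3⟩

lemma octant_integral {θ : ℝ} (hθ : 0 < θ) (k : Fin 3 → Fin 2) :
    ∫ y in octant k, wigner3 θ y = 1/8 := by
  rw [octant_eq]
  have h : ∀ y : ℝ × ℝ × ℝ, wigner3 θ y
      = wigner θ y.1 * (wigner θ y.2.1 * wigner θ y.2.2) := by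
    intro y; rw [wigner3, mul_assoc]
  simp_rw [h]
  rw [Measure.volume_eq_prod, setIntegral_prod_mul (μ := volume) (ν := volume)
    (wigner θ) (fun p : ℝ × ℝ => wigner θ p.1 * wigner θ p.2)]
  rw [Measure.volume_eq_prod, setIntegral_prod_mul (μ := volume) (ν := volume)
    (wigner θ) (wigner θ)]
  rw [wigner_int_halfLine hθ, wigner_int_halfLine hθ, wigner_int_halfLine hθ]
  norm_num

/-! ### Measure preservation of `y ↦ y⁻¹x` -/

lemma shear_mp (a : ℝ) : MeasurePreserving (fun p : ℝ × ℝ => (p.1 - a * p.2, p.2))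
    (volume : Measure (ℝ × ℝ)) volume := by
  rw [Measure.volume_eq_prod]
  have h1 : MeasurePreserving (fun p : ℝ × ℝ => (p.1, p.2 - a * p.1))
      ((volume : Measure ℝ).prod volume) ((volume : Measure ℝ).prod volume) := by
    apply MeasurePreserving.skew_product (MeasurePreserving.id _)
      (g := fun v u => u - a * v)
    · exact measurable_snd.sub (measurable_const.mul measurable_fst)
    · exact ae_of_all _ fun v => (measurePreserving_sub_right volume (a * v)).map_eq
  have h2 := (Measure.measurePreserving_swap.comp h1).comp Measure.measurePreserving_swap
  convert h2 using 1 <;> rfl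

lemma inner_mp (x : ℝ × ℝ × ℝ) (a : ℝ) :
    MeasurePreserving (fun p : ℝ × ℝ => (x.2.1 - p.1 + a * p.2 - a * x.2.2, x.2.2 - p.2))
      (volume : Measure (ℝ × ℝ)) volume := by
  have h1 : MeasurePreserving (Prod.map (fun b => x.2.1 - b) (fun c => x.2.2 - c))
      (volume : Measure (ℝ × ℝ)) volume := by
    rw [Measure.volume_eq_prod]
    exact (Measure.measurePreserving_sub_left volume x.2.1).prod
      (Measure.measurePreserving_sub_left volume x.2.2)
  have h2 := (shear_mp a).comp h1
  convert h2 using 2 with p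
  ext <;> simp [Prod.map] <;> ring

lemma heis_mp (x : ℝ × ℝ × ℝ) : MeasurePreserving (fun y => heisInvMul y x)
    (volume : Measure (ℝ × ℝ × ℝ)) volume := by
  rw [Measure.volume_eq_prod]
  have h : (fun y => heisInvMul y x) = fun p : ℝ × (ℝ × ℝ) =>
      (x.1 - p.1,
        (fun a (q : ℝ × ℝ) => (x.2.1 - q.1 + a * q.2 - a * x.2.2, x.2.2 - q.2)) p.1 p.2) :=
    rfl
  rw [h]
  apply MeasurePreserving.skew_product
    (g := fun a (q : ℝ × ℝ) => (x.2.1 - q.1 + a * q.2 - a * x.2.2, x.2.2 - q.2))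
    (Measure.measurePreserving_sub_left volume x.1)
  · apply Measurable.prod <;> fun_prop
  · exact ae_of_all _ fun a => (inner_mp x a).map_eq

/-! ### Main theorem -/

/-- Fejér-type theorem for the Heisenberg group `ℍ`: the octants `J_k` form a local
partition of `ℍ` at its identity with `∫_{J_k} W_θ³ da db dc = 1/8` for every `k`, and if
`f ∈ L¹(ℍ)` or `f ∈ L^∞(ℍ)` is such that, at a point `x` of `ℍ`, each limit
`f(x, J_k) = lim_{y→e, y ∈ J_k} f(y⁻¹x)` exists, then
`(W_θ³ * f)(x) → (1/8) ∑_{k ∈ {0,1}³} f(x, J_k)` as `θ → 0⁺`. -/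
theorem heisenberg_fejer (f : ℝ × ℝ × ℝ → ℂ)
    (hf : Integrable f volume ∨ MemLp f ⊤ volume)
    (x : ℝ × ℝ × ℝ) (L : (Fin 3 → Fin 2) → ℂ)
    (hL : ∀ k : Fin 3 → Fin 2, Tendsto (fun y => f (heisInvMul y x))
      (𝓝[octant k] ((0 : ℝ), (0 : ℝ), (0 : ℝ))) (𝓝 (L k))) :
    (∀ θ > (0 : ℝ), ∀ k : Fin 3 → Fin 2,
      (∫ y in octant k, wigner3 θ y) = 1/8) ∧
    Tendsto (fun θ : ℝ => ∫ y, (wigner3 θ y : ℂ) * f (heisInvMul y x))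
      (𝓝[>] 0) (𝓝 ((1/8) * ∑ k : Fin 3 → Fin 2, L k)) := by
  constructor
  · exact fun θ hθ k => octant_integral hθ k
  -- measurability of `y ↦ f (y⁻¹ x)`
  have hT := heis_mp x
  have aesm_f : AEStronglyMeasurable f volume :=
    hf.elim (fun h => h.aestronglyMeasurable) (fun h => h.aestronglyMeasurable)
  have aesm_fT : AEStronglyMeasurable (fun y => f (heisInvMul y x)) volume :=
    aesm_f.comp_quasiMeasurePreserving hT.quasiMeasurePreserving
  -- integrability of the complex kernel
  have hIntW : ∀ θ : ℝ, 0 < θ → Integrable (fun y : ℝ × ℝ × ℝ => (wigner3 θ y : ℂ)) volume :=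
    fun θ hθ => (wigner3_integrable hθ).ofReal
  -- integrability of the integrand
  have hInt : ∀ θ : ℝ, 0 < θ →
      Integrable (fun y => (wigner3 θ y : ℂ) * f (heisInvMul y x)) volume := by
    intro θ hθ
    have haesm : AEStronglyMeasurable
        (fun y => (wigner3 θ y : ℂ) * f (heisInvMul y x)) volume :=
      ((Complex.continuous_ofReal.comp (wigner3_continuous θ)).aestronglyMeasurable).mul aesm_fT
    rcases hf with hf1 | hf2
    · -- f ∈ L¹ : kernel bounded
      have hfT : Integrable (fun y => f (heisInvMul y x)) volume :=
        (hT.integrable_comp aesm_f).mpr hf1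
      apply Integrable.mono' (hfT.norm.const_mul ((2 / (π * θ)) ^ 3)) haesm
      apply ae_of_all
      intro y
      rw [norm_mul, Complex.norm_real, Real.norm_eq_abs,
        abs_of_nonneg (wigner3_nonneg θ y)]
      exact mul_le_mul_of_nonneg_right (wigner3_bound hθ y) (norm_nonneg _)
    · -- f ∈ L^∞ : kernel integrable, f bounded a.e.
      set C : ℝ := (eLpNormEssSup f volume).toReal with hC
      have hflt : eLpNormEssSup f volume < ⊤ := by
        have := hf2.2
        rwa [eLpNorm_exponent_top] at this
      have hbdd : ∀ᵐ y ∂(volume : Measure (ℝ × ℝ × ℝ)), ‖f y‖ ≤ C := by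
        filter_upwards [ae_le_eLpNormEssSup (f := f) (μ := volume)] with y hy
        have h2 := ENNReal.toReal_mono hflt.ne hy
        simpa using h2
      have hbddT : ∀ᵐ y ∂(volume : Measure (ℝ × ℝ × ℝ)), ‖f (heisInvMul y x)‖ ≤ C :=
        hT.quasiMeasurePreserving.ae hbdd
      apply Integrable.mono' ((wigner3_integrable hθ).const_mul C) haesm
      filter_upwards [hbddT] with y hy
      rw [norm_mul, Complex.norm_real, Real.norm_eq_abs,
        abs_of_nonneg (wigner3_nonneg θ y)]
      calc wigner3 θ y * ‖f (heisInvMul y x)‖ ≤ wigner3 θ y * C :=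
            mul_le_mul_of_nonneg_left hy (wigner3_nonneg θ y)
      _ = C * wigner3 θ y := mul_comm _ _
  -- the limit
  rw [Metric.tendsto_nhdsWithin_nhds]
  intro ε hε
  set ε' : ℝ := ε / 2 with hε'def
  have hε' : 0 < ε' := half_pos hε
  -- choose δ for each octant
  have hchoice : ∀ k : Fin 3 → Fin 2, ∃ δ > 0, ∀ y ∈ octant k,
      dist y ((0:ℝ), (0:ℝ), (0:ℝ)) < δ → dist (f (heisInvMul y x)) (L k) < ε' := by
    intro k
    obtain ⟨δ, hδpos, hδ⟩ := Metric.tendsto_nhdsWithin_nhds.mp (hL k) ε' hε'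
    exact ⟨δ, hδpos, fun y hy hyd => hδ hy hyd⟩
  choose δ hδpos hδ using hchoice
  have hne : (Finset.univ : Finset (Fin 3 → Fin 2)).Nonempty := Finset.univ_nonempty
  set δ₀ : ℝ := Finset.univ.inf' hne δ with hδ₀def
  have hδ₀pos : 0 < δ₀ := by
    rw [hδ₀def, Finset.lt_inf'_iff]
    exact fun k _ => hδpos k
  refine ⟨δ₀, hδ₀pos, ?_⟩
  intro θ hθmem hθdist
  have hθ : 0 < θ := hθmem
  have hθlt : θ < δ₀ := by
    rwa [Real.dist_eq, sub_zero, abs_of_pos hθ] at hθdist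
  -- pointwise bound on each octant
  have hptwise : ∀ k : Fin 3 → Fin 2, ∀ y ∈ octant k,
      ‖(wigner3 θ y : ℂ) * f (heisInvMul y x) - (wigner3 θ y : ℂ) * L k‖
        ≤ ε' * wigner3 θ y := by
    intro k y hy
    rw [← mul_sub, norm_mul, Complex.norm_real, Real.norm_eq_abs,
      abs_of_nonneg (wigner3_nonneg θ y)]
    by_cases hw : wigner3 θ y = 0
    · rw [hw]; simp
    · have hw1 : wigner θ y.1 ≠ 0 := fun h => hw (by rw [wigner3, h]; ring)
      have hw2 : wigner θ y.2.1 ≠ 0 := fun h => hw (by rw [wigner3, h]; ring)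
      have hw3 : wigner θ y.2.2 ≠ 0 := fun h => hw (by rw [wigner3, h]; ring)
      have hd : dist y ((0:ℝ), (0:ℝ), (0:ℝ)) < δ k := by
        have e1 := abs_lt_of_wigner_ne hθ.le hw1
        have e2 := abs_lt_of_wigner_ne hθ.le hw2
        have e3 := abs_lt_of_wigner_ne hθ.le hw3
        have hθδ : θ < δ k := lt_of_lt_of_le hθlt
          (Finset.inf'_le δ (Finset.mem_univ k))
        rw [Prod.dist_eq, Prod.dist_eq]
        simp only [Real.dist_eq, sub_zero]
        exact max_lt (lt_trans e1 hθδ) (max_lt (lt_trans e2 hθδ) (lt_trans e3 hθδ))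
      have := hδ k y hy hd
      rw [dist_eq_norm] at this
      calc wigner3 θ y * ‖f (heisInvMul y x) - L k‖ ≤ wigner3 θ y * ε' :=
            mul_le_mul_of_nonneg_left this.le (wigner3_nonneg θ y)
      _ = ε' * wigner3 θ y := mul_comm _ _
  -- decompose the integral over octants
  have hdecomp : ∫ y, (wigner3 θ y : ℂ) * f (heisInvMul y x)
      = ∑ k : Fin 3 → Fin 2, ∫ y in octant k, (wigner3 θ y : ℂ) * f (heisInvMul y x) := by
    rw [← setIntegral_univ, ← octant_iUnion,
      integral_iUnion measurableSet_octant octant_disjoint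
        ((hInt θ hθ).integrableOn), tsum_fintype]
  -- value of the constant integral on each octant
  have hconst : ∀ k : Fin 3 → Fin 2,
      ∫ y in octant k, (wigner3 θ y : ℂ) * L k = (1/8 : ℂ) * L k := by
    intro k
    rw [integral_mul_const]
    congr 1
    have h8 := octant_integral hθ k
    rw [show ((1:ℂ)/8) = ((1/8 : ℝ) : ℂ) by norm_num, ← h8]
    exact integral_ofReal
  -- per-octant error bound
  have hk_bound : ∀ k : Fin 3 → Fin 2,
      ‖(∫ y in octant k, (wigner3 θ y : ℂ) * f (heisInvMul y x)) - (1/8 : ℂ) * L k‖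
        ≤ ε' / 8 := by
    intro k
    rw [← hconst k, ← integral_sub ((hInt θ hθ).integrableOn)
      (((hIntW θ hθ).mul_const (L k)).integrableOn)]
    have hmaj : Integrable (fun y : ℝ × ℝ × ℝ => ε' * wigner3 θ y)
        (volume.restrict (octant k)) :=
      ((wigner3_integrable hθ).const_mul ε').integrableOn
    have hbd : ∀ᵐ y ∂(volume.restrict (octant k)),
        ‖(wigner3 θ y : ℂ) * f (heisInvMul y x) - (wigner3 θ y : ℂ) * L k‖
          ≤ ε' * wigner3 θ y :=
      (ae_restrict_iff' (measurableSet_octant k)).mpr (ae_of_all _ (hptwise k))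
    calc ‖∫ y in octant k,
          ((wigner3 θ y : ℂ) * f (heisInvMul y x) - (wigner3 θ y : ℂ) * L k)‖
        ≤ ∫ y in octant k, ε' * wigner3 θ y := norm_integral_le_of_norm_le hmaj hbd
    _ = ε' * ∫ y in octant k, wigner3 θ y := integral_const_mul ε' _
    _ = ε' / 8 := by rw [octant_integral hθ k]; ring
  -- assemble
  rw [dist_eq_norm, hdecomp]
  have hS : (1/8 : ℂ) * ∑ k : Fin 3 → Fin 2, L k
      = ∑ k : Fin 3 → Fin 2, (1/8 : ℂ) * L k := Finset.mul_sum _ _ _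
  rw [hS, ← Finset.sum_sub_distrib]
  calc ‖∑ k : Fin 3 → Fin 2,
        ((∫ y in octant k, (wigner3 θ y : ℂ) * f (heisInvMul y x)) - (1/8 : ℂ) * L k)‖
      ≤ ∑ k : Fin 3 → Fin 2,
        ‖(∫ y in octant k, (wigner3 θ y : ℂ) * f (heisInvMul y x)) - (1/8 : ℂ) * L k‖ :=
        norm_sum_le _ _
  _ ≤ ∑ _k : Fin 3 → Fin 2, ε' / 8 := Finset.sum_le_sum fun k _ => hk_bound k
  _ = 8 * (ε' / 8) := by
        rw [Finset.sum_const, Finset.card_univ]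
        norm_num [Fintype.card_fun]
  _ = ε' := by ring
  _ < ε := by rw [hε'def]; linarith
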